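/- For the trigonal bipyramid vertices x₁=p₁,…,x₅=p₅ (which satisfy Σxᵢ = 0 and span ℝ³), the vector t = (1/√6)·(3, 3, −2, −2, −2) ∈ ℝ⁵ satisfies Xᵀt = 0, t₁+⋯+t₅ = 0, and tᵀt = 5, and the corresponding matrix M = Σᵢ tᵢBᵢ equals (1/√6)·diag(6h²−3, 6h²−3, −6). Consequently −M is positive definite exactly when h² < 1/2. -/
import Mathlib


open Matrix

/-- The five vertices of the trigonal bipyramid `BP`, as rows of the `5 × 3` matrix `X`. -/
noncomputable def bpv (h : ℝ) : Fin 5 → Fin 3 → ℝ :=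
  ![![0, 0, h], ![0, 0, -h], ![1, 0, 0], ![-(1/2), Real.sqrt 3 / 2, 0],
    ![-(1/2), -(Real.sqrt 3 / 2), 0]]

/-- `Bᵢ = tr(Vᵢ − V)·I₃ − (Vᵢ − V)` where `Vᵢ = xᵢxᵢᵀ` and `V = (Σⱼ xⱼxⱼᵀ)/5`. -/
noncomputable def Bmat (x : Fin 5 → Fin 3 → ℝ) (i : Fin 5) : Matrix (Fin 3) (Fin 3) ℝ :=
  (vecMulVec (x i) (x i) - (5 : ℝ)⁻¹ • ∑ j, vecMulVec (x j) (x j)).trace •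
      (1 : Matrix (Fin 3) (Fin 3) ℝ)
    - (vecMulVec (x i) (x i) - (5 : ℝ)⁻¹ • ∑ j, vecMulVec (x j) (x j))

/-- `t = (1/√6)·(3, 3, −2, −2, −2)`. -/
noncomputable def tvec : Fin 5 → ℝ := (Real.sqrt 6)⁻¹ • ![3, 3, -2, -2, -2]

lemma bp_sum_vecMulVec (h : ℝ) : ∑ j, vecMulVec (bpv h j) (bpv h j)
    = Matrix.diagonal ![3/2, 3/2, 2*h^2] := by
  have h3 : Real.sqrt 3 * Real.sqrt 3 = 3 := Real.mul_self_sqrt (by norm_num)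
  ext i j
  fin_cases i <;> fin_cases j <;>
    simp [bpv, vecMulVec, Fin.sum_univ_five, Matrix.sum_apply, Matrix.diagonal,
      Matrix.vecHead, Matrix.vecTail] <;>
    nlinarith [h3]

lemma bp_M (h : ℝ) : ∑ i, tvec i • Bmat (bpv h) i
    = (Real.sqrt 6)⁻¹ • Matrix.diagonal ![6 * h ^ 2 - 3, 6 * h ^ 2 - 3, -6] := by
  simp only [Bmat, bp_sum_vecMulVec]
  ext i j
  fin_cases i <;> fin_cases j <;>
    simp [bpv, tvec, vecMulVec, Fin.sum_univ_five, Fin.sum_univ_three, Matrix.sum_apply,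
      Matrix.diagonal, Matrix.trace, Matrix.diag, Matrix.one_apply,
      Matrix.vecHead, Matrix.vecTail] <;>
    ring_nf <;> linear_combination (-(Real.sqrt 6)⁻¹) * Real.sq_sqrt (show (0:ℝ) ≤ 3 by norm_num)

/-- For the trigonal bipyramid vertices (which sum to zero and span `ℝ³`), the vector
`t = (1/√6)(3,3,−2,−2,−2)` satisfies `Xᵀt = 0`, `Σtᵢ = 0`, `tᵀt = 5`, and
`M = Σᵢ tᵢBᵢ = (1/√6)·diag(6h²−3, 6h²−3, −6)`; consequently `−M` is positive definite
exactly when `h² < 1/2`. -/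
theorem bipyramid_t_and_M (h : ℝ) (h0 : 0 < h) :
    (∑ i, bpv h i = 0) ∧
    Submodule.span ℝ (Set.range (bpv h)) = ⊤ ∧
    (∀ j : Fin 3, ∑ i, tvec i * bpv h i j = 0) ∧
    (∑ i, tvec i = 0) ∧
    (∑ i, tvec i ^ 2 = 5) ∧
    (∑ i, tvec i • Bmat (bpv h) i
      = (Real.sqrt 6)⁻¹ • Matrix.diagonal ![6 * h ^ 2 - 3, 6 * h ^ 2 - 3, -6]) ∧
    ((-(∑ i, tvec i • Bmat (bpv h) i)).PosDef ↔ h ^ 2 < 1 / 2) := by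
  have h3 : Real.sqrt 3 ≠ 0 := by positivity
  have h6 : (0:ℝ) < Real.sqrt 6 := Real.sqrt_pos.mpr (by norm_num)
  have hsq6 : Real.sqrt 6 * Real.sqrt 6 = 6 := Real.mul_self_sqrt (by norm_num)
  refine ⟨?_, ?_, ?_, ?_, ?_, bp_M h, ?_⟩
  · ext j
    fin_cases j <;> simp [bpv, Fin.sum_univ_five, Matrix.vecHead, Matrix.vecTail] <;> ring
  · rw [eq_top_iff]
    rintro v -
    have hv : v = (v 2 / h) • bpv h 0 + v 0 • bpv h 2
        + (v 1 / Real.sqrt 3) • bpv h 3 - (v 1 / Real.sqrt 3) • bpv h 4 := by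
      ext j
      fin_cases j <;> simp [bpv] <;> field_simp <;> ring
    rw [hv]
    refine sub_mem (add_mem (add_mem ?_ ?_) ?_) ?_ <;>
      exact Submodule.smul_mem _ _ (Submodule.subset_span ⟨_, rfl⟩)
  · intro j
    fin_cases j <;> simp [bpv, tvec, Fin.sum_univ_five, Matrix.vecHead, Matrix.vecTail] <;> ring
  · simp [tvec, Fin.sum_univ_five]; ring
  · simp [tvec, Fin.sum_univ_five]
    field_simp
    nlinarith [hsq6]
  · rw [bp_M]
    have : -((Real.sqrt 6)⁻¹ • Matrix.diagonal ![6 * h ^ 2 - 3, 6 * h ^ 2 - 3, -6])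
        = Matrix.diagonal ((Real.sqrt 6)⁻¹ • ![3 - 6 * h ^ 2, 3 - 6 * h ^ 2, 6]) := by
      rw [Matrix.diagonal_smul]
      ext i j
      fin_cases i <;> fin_cases j <;> simp [Matrix.diagonal] <;> ring
    rw [this, Matrix.posDef_diagonal_iff]
    constructor
    · intro hp
      have := hp 0
      simp [Matrix.vecHead, Matrix.vecTail] at this
      linarith
    · intro hlt i
      fin_cases i <;> simp [Matrix.vecHead, Matrix.vecTail] <;> first | positivity | linarith
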